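/- Let X be a real Banach space, p > 1 with conjugate exponent p*, let j_p : X → X* be a selection of the duality mapping, j_q : X* → X an inverse duality selection, and suppose X* is p*-smooth with constant G > 0 relative to j_q. Let u* ∈ X* with u* ≠ 0, β ∈ ℝ, and x, z ∈ X with ⟨u*, x⟩ ≥ β and ⟨u*, z⟩ ≤ β. Set t̃ := ((⟨u*, x⟩ − β)/(G‖u*‖^{p*}))^{p−1} and x̃ := j_q(j_p(x) − t̃·u*). Then D_p(x̃, z) ≤ D_p(x, z) − (1/(p·G^{p−1}))·((⟨u*, x⟩ − β)/‖u*‖)^p. -/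

import Mathlib

/-- The Bregman distance associated with a selection `jp` of the duality mapping
`J_p^X`:  `D_p(x, x̃) = (1/p)‖x̃‖^p − (1/p)‖x‖^p − ⟨jp x, x̃ − x⟩`. -/
noncomputable def bregmanDist {X : Type*} [NormedAddCommGroup X] [NormedSpace ℝ X]
    (p : ℝ) (jp : X → StrongDual ℝ X) (x x' : X) : ℝ :=
  (1 / p) * ‖x'‖ ^ p - (1 / p) * ‖x‖ ^ p - jp x (x' - x)

/-- Descent property of the Bregman projection step onto the halfspace
`{v : ⟨u*, v⟩ ≤ β}` with the explicit step size `t̃`, in a space whose dual is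
`p*`-smooth with constant `G`. -/
theorem bregman_projection_halfspace_descent
    {X : Type*} [NormedAddCommGroup X] [NormedSpace ℝ X] [CompleteSpace X]
    (p q : ℝ) (hp : 1 < p) (hpq : 1 / p + 1 / q = 1)
    (jp : X → StrongDual ℝ X) (jq : StrongDual ℝ X → X)
    (hjp : ∀ v : X, jp v v = ‖v‖ ^ p ∧ ‖jp v‖ = ‖v‖ ^ (p - 1))
    (hinv1 : ∀ xs : StrongDual ℝ X, jp (jq xs) = xs)
    (hinv2 : ∀ x : X, jq (jp x) = x)
    (G : ℝ) (hG : 0 < G)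
    (hsmooth : ∀ xs ys : StrongDual ℝ X,
      (1 / q) * ‖xs - ys‖ ^ q ≤ (1 / q) * ‖xs‖ ^ q - ys (jq xs) + (G / q) * ‖ys‖ ^ q)
    (us : StrongDual ℝ X) (hus : us ≠ 0) (β : ℝ) (x z : X)
    (hx : β ≤ us x) (hz : us z ≤ β) :
    bregmanDist p jp (jq (jp x - (((us x - β) / (G * ‖us‖ ^ q)) ^ (p - 1)) • us)) z ≤
      bregmanDist p jp x z - (1 / (p * G ^ (p - 1))) * ((us x - β) / ‖us‖) ^ p := by
  have hp0 : (0:ℝ) < p := by linarith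
  have hp1 : (0:ℝ) < p - 1 := by linarith
  have h1p : 1 / p < 1 := by rw [div_lt_one hp0]; exact hp
  have hq0 : (0:ℝ) < q := by
    have h : 0 < 1 / q := by linarith
    exact one_div_pos.mp h
  have hpne : p ≠ 0 := ne_of_gt hp0
  have hqne : q ≠ 0 := ne_of_gt hq0
  have hmul : p + q = p * q := by
    field_simp at hpq; linarith
  have hpq' : (p - 1) * q = p := by nlinarith
  set a := us x - β with ha_def
  have ha : 0 ≤ a := by simp only [ha_def]; linarith
  have hn : (0:ℝ) < ‖us‖ := norm_pos_iff.mpr hus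
  set n := ‖us‖ with hn_def
  set t := (a / (G * n ^ q)) ^ (p - 1) with ht_def
  have hGn : (0:ℝ) < G * n ^ q := by positivity
  have ht : 0 ≤ t := Real.rpow_nonneg (by positivity) _
  set xts := jp x - t • us with hxts_def
  have hjx : jp (jq xts) = xts := hinv1 _
  -- norm identities
  have hnorm1 : ‖jq xts‖ ^ p = ‖xts‖ ^ q := by
    have h2 := (hjp (jq xts)).2
    rw [hjx] at h2
    rw [h2, ← Real.rpow_mul (norm_nonneg _), hpq']
  have hnorm2 : ‖x‖ ^ p = ‖jp x‖ ^ q := by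
    rw [(hjp x).2, ← Real.rpow_mul (norm_nonneg _), hpq']
  -- key algebraic identity
  set K := (a / n) ^ p with hK_def
  have hKnn : 0 ≤ K := Real.rpow_nonneg (by positivity) _
  have hGp1 : (0:ℝ) < G ^ (p - 1) := Real.rpow_pos_of_pos hG _
  have hnp : (0:ℝ) < n ^ p := Real.rpow_pos_of_pos hn _
  have key : -(t * a) + (G / q) * (t * n) ^ q = -((1 / (p * G ^ (p - 1))) * K) := by
    rcases eq_or_lt_of_le ha with h0 | h0
    · have ht0 : t = 0 := by
        rw [ht_def, ← h0, zero_div, Real.zero_rpow (ne_of_gt hp1)]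
      have hK0 : K = 0 := by
        rw [hK_def, ← h0, zero_div, Real.zero_rpow hpne]
      rw [ht0, hK0, zero_mul, zero_mul, Real.zero_rpow hqne]
      ring
    · have ht' : t = a ^ (p - 1) / (G ^ (p - 1) * n ^ p) := by
        rw [ht_def, Real.div_rpow ha hGn.le,
          Real.mul_rpow hG.le (Real.rpow_nonneg hn.le q),
          ← Real.rpow_mul hn.le, mul_comm q (p - 1), hpq']
      have hGne : G ≠ 0 := ne_of_gt hG
      have hGp1ne : G ^ (p - 1) ≠ 0 := ne_of_gt hGp1
      have hnqne : n ^ q ≠ 0 := ne_of_gt (Real.rpow_pos_of_pos hn q)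
      have hnpne : n ^ p ≠ 0 := ne_of_gt hnp
      have hGpne : G ^ p ≠ 0 := ne_of_gt (Real.rpow_pos_of_pos hG p)
      have E1 : t * a = K / G ^ (p - 1) := by
        rw [ht', hK_def, Real.div_rpow ha hn.le]
        rw [div_mul_eq_mul_div, ← Real.rpow_add_one (ne_of_gt h0), sub_add_cancel,
          div_div, mul_comm (n ^ p) (G ^ (p - 1))]
      have hnqp : (n ^ q) ^ p = n ^ p * n ^ q := by
        have hqp : q * p = p + q := by rw [mul_comm]; linarith
        rw [← Real.rpow_mul hn.le, hqp, Real.rpow_add hn]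
      have htq : t ^ q = a ^ p / (G ^ p * (n ^ p * n ^ q)) := by
        rw [ht_def, ← Real.rpow_mul (div_nonneg ha hGn.le), hpq',
          Real.div_rpow ha hGn.le,
          Real.mul_rpow hG.le (Real.rpow_nonneg hn.le q), hnqp]
      have E2 : (t * n) ^ q = K / G ^ p := by
        rw [Real.mul_rpow ht hn.le, htq, hK_def, Real.div_rpow h0.le hn.le]
        field_simp
      have hGsplit : G ^ p = G ^ (p - 1) * G := by
        rw [← Real.rpow_add_one (ne_of_gt hG), sub_add_cancel]
      have E2' : (G / q) * (t * n) ^ q = (1 / q) * (K / G ^ (p - 1)) := by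
        rw [E2, hGsplit]
        field_simp
      rw [E1, E2']
      linear_combination (K / G ^ (p - 1)) * hpq
  -- smoothness inequality
  have hsm := hsmooth (jp x) (t • us)
  rw [hinv2 x] at hsm
  have hys : ‖t • us‖ = t * n := by
    rw [norm_smul, Real.norm_of_nonneg ht]
  rw [hys] at hsm
  have happ : (t • us) x = t * us x := by
    simp [smul_eq_mul]
  rw [happ] at hsm
  -- reduced inequality
  have hxtsz : xts z = jp x z - t * us z := by
    simp [hxts_def, smul_eq_mul]
  have htz : t * us z ≤ t * β := mul_le_mul_of_nonneg_left hz ht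
  have red : (1 / q) * ‖xts‖ ^ q - xts z ≤
      (1 / q) * ‖jp x‖ ^ q - jp x z - (1 / (p * G ^ (p - 1))) * K := by
    have ha' : us x = a + β := by rw [ha_def]; ring
    rw [hxtsz]
    have hxts_eq : jp x - t • us = xts := hxts_def.symm
    rw [hxts_eq] at hsm
    have hsplit : t * us x = t * a + t * β := by rw [ha_def]; ring
    linarith [hsm, htz, key, hsplit]
  -- assemble
  have e1 : jp (jq xts) (z - jq xts) = xts z - ‖jq xts‖ ^ p := by
    rw [map_sub, (hjp (jq xts)).1, hjx]
  have e2 : jp x (z - x) = jp x z - ‖x‖ ^ p := by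
    rw [map_sub, (hjp x).1]
  show bregmanDist p jp (jq xts) z ≤ bregmanDist p jp x z - (1 / (p * G ^ (p - 1))) * K
  simp only [bregmanDist, e1, e2]
  have hA : 1 / p * ‖xts‖ ^ q = ‖xts‖ ^ q - 1 / q * ‖xts‖ ^ q := by
    linear_combination (‖xts‖ ^ q) * hpq
  have hB : 1 / p * ‖jp x‖ ^ q = ‖jp x‖ ^ q - 1 / q * ‖jp x‖ ^ q := by
    linear_combination (‖jp x‖ ^ q) * hpq
  rw [hnorm1, hnorm2]
  linarith [red, hA, hB]
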